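/- For every N ≥ 2, δ·Σ_{u=2}^{N} Σ_{t=2}^{N} 1/(t+u) ≤ δ·∫₁^N ∫₁^N 1/(t+u) dt du ≤ δ·(2N log 2 + 2 log 2), where N = π/(8δ); hence δ·Σ_{u=2}^{π/(8δ)} Σ_{t=2}^{π/(8δ)} 1/(t+u) = O(1) as δ → 0. -/

import Mathlib

open Real Finset intervalIntegral

lemma aux_sum_le_integral {f : ℝ → ℝ} {M : ℕ} {N : ℝ} (hM : 2 ≤ M) (hMN : (M : ℝ) ≤ N)
    (hf : AntitoneOn f (Set.Icc 1 N)) (hf0 : ∀ x ∈ Set.Icc (1:ℝ) N, 0 ≤ f x) :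
    ∑ t ∈ Finset.Icc 2 M, f t ≤ ∫ x in (1:ℝ)..N, f x := by
  have hM1 : (1:ℝ) ≤ M := by exact_mod_cast Nat.one_le_of_lt hM
  have h1N : (1:ℝ) ≤ N := le_trans hM1 hMN
  have hcast : (1:ℝ) + ((M - 1 : ℕ) : ℝ) = (M : ℝ) := by
    have : (1:ℕ) ≤ M := by omega
    push_cast [this]; ring
  have hsub : Set.Icc (1:ℝ) (1 + ((M - 1 : ℕ) : ℝ)) ⊆ Set.Icc 1 N := by
    rw [hcast]; exact Set.Icc_subset_Icc le_rfl hMN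
  have key := (hf.mono hsub).sum_le_integral
  have hsum : ∑ t ∈ Finset.Icc 2 M, f t
      = ∑ i ∈ Finset.range (M - 1), f ((1:ℝ) + ((i + 1 : ℕ) : ℝ)) := by
    rw [← Finset.Ico_add_one_right_eq_Icc, Finset.sum_Ico_eq_sum_range]
    have : M + 1 - 2 = M - 1 := by omega
    rw [this]
    refine Finset.sum_congr rfl fun i _ => ?_
    congr 1; push_cast; ring
  have hIM : ∫ x in (1:ℝ)..(1 + ((M - 1 : ℕ) : ℝ)), f x = ∫ x in (1:ℝ)..(M:ℝ), f x := by
    rw [hcast]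
  have hint1 : IntervalIntegrable f MeasureTheory.volume 1 (M:ℝ) := by
    apply AntitoneOn.intervalIntegrable
    rw [Set.uIcc_of_le hM1]
    exact hf.mono (Set.Icc_subset_Icc le_rfl hMN)
  have hint2 : IntervalIntegrable f MeasureTheory.volume (M:ℝ) N := by
    apply AntitoneOn.intervalIntegrable
    rw [Set.uIcc_of_le hMN]
    exact hf.mono (Set.Icc_subset_Icc hM1 le_rfl)
  have hsplit : ∫ x in (1:ℝ)..N, f x
      = (∫ x in (1:ℝ)..(M:ℝ), f x) + ∫ x in (M:ℝ)..N, f x :=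
    (intervalIntegral.integral_add_adjacent_intervals hint1 hint2).symm
  have hpos : 0 ≤ ∫ x in (M:ℝ)..N, f x := by
    apply intervalIntegral.integral_nonneg hMN
    intro x hx
    exact hf0 x ⟨le_trans hM1 hx.1, hx.2⟩
  rw [hsum, hsplit]
  calc ∑ i ∈ Finset.range (M - 1), f ((1:ℝ) + ((i + 1 : ℕ) : ℝ))
      ≤ ∫ x in (1:ℝ)..(1 + ((M-1:ℕ):ℝ)), f x := key
    _ = ∫ x in (1:ℝ)..(M:ℝ), f x := hIM
    _ ≤ _ := le_add_of_nonneg_right hpos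

lemma aux_inner_val {u N : ℝ} (hu : 0 ≤ u) (hN : 1 ≤ N) :
    ∫ t in (1:ℝ)..N, 1/(t+u) = Real.log (u + N) - Real.log (u + 1) := by
  have h := intervalIntegral.integral_comp_add_right (a := (1:ℝ)) (b := N)
    (fun x => 1/x) u
  rw [show (fun t => 1/(t+u)) = (fun t => (fun x => 1/x) (t+u)) from rfl] at *
  rw [h, integral_one_div, Real.log_div (by positivity) (by positivity)]
  · rw [show N + u = u + N by ring, show (1:ℝ) + u = u + 1 by ring]
  · rw [Set.uIcc_of_le (by linarith)]
    intro hmem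
    simp only [Set.mem_Icc] at hmem
    linarith [hmem.1]

lemma aux_log_int {a N : ℝ} (ha : 0 < a) (hN : 1 ≤ N) :
    ∫ u in (1:ℝ)..N, Real.log (u + a)
      = (N+a)*Real.log (N+a) - (1+a)*Real.log (1+a) - (N+a) + (1+a) := by
  have h := intervalIntegral.integral_comp_add_right (a := (1:ℝ)) (b := N)
    (fun x => Real.log x) a
  rw [show (fun u => Real.log (u+a)) = (fun u => (fun x => Real.log x) (u+a)) from rfl] at *
  rw [h, integral_log]

lemma aux_part2 {N : ℝ} (hN : 2 ≤ N) :
    (∫ u in (1:ℝ)..N, ∫ t in (1:ℝ)..N, 1/(t+u))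
      ≤ 2 * N * Real.log 2 + 2 * Real.log 2 := by
  have h1N : (1:ℝ) ≤ N := by linarith
  have hNpos : (0:ℝ) < N := by linarith
  have hcong : (∫ u in (1:ℝ)..N, ∫ t in (1:ℝ)..N, 1/(t+u))
      = ∫ u in (1:ℝ)..N, (Real.log (u + N) - Real.log (u + 1)) := by
    apply intervalIntegral.integral_congr
    intro u hu
    rw [Set.uIcc_of_le h1N] at hu
    exact aux_inner_val (by linarith [hu.1]) h1N
  have hi1 : IntervalIntegrable (fun u => Real.log (u + N)) MeasureTheory.volume 1 N := by
    apply ContinuousOn.intervalIntegrable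
    apply ContinuousOn.log (by fun_prop)
    intro x hx
    rw [Set.uIcc_of_le h1N] at hx
    nlinarith [hx.1]
  have hi2 : IntervalIntegrable (fun u => Real.log (u + 1)) MeasureTheory.volume 1 N := by
    apply ContinuousOn.intervalIntegrable
    apply ContinuousOn.log (by fun_prop)
    intro x hx
    rw [Set.uIcc_of_le h1N] at hx
    nlinarith [hx.1]
  rw [hcong, intervalIntegral.integral_sub hi1 hi2,
    aux_log_int hNpos h1N, aux_log_int one_pos h1N]
  have hlog2N : Real.log (N + N) = Real.log 2 + Real.log N := by
    rw [show N + N = 2 * N by ring, Real.log_mul two_ne_zero hNpos.ne']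
  rw [hlog2N]
  have hkey : N * Real.log N ≤ (1 + N) * Real.log (1 + N) := by
    have h1 : Real.log N ≤ Real.log (1 + N) := by
      apply Real.log_le_log hNpos; linarith
    have h2 : 0 ≤ Real.log N := Real.log_nonneg h1N
    nlinarith
  have : Real.log (1 + 1) = Real.log 2 := by norm_num
  rw [this]
  have hc : Real.log (N + 1) = Real.log (1 + N) := by rw [add_comm]
  nlinarith [hkey, hc]

lemma aux_sum_le_double {N : ℝ} (hN : 2 ≤ N) :
    ∑ u ∈ Finset.Icc 2 ⌊N⌋₊, ∑ t ∈ Finset.Icc 2 ⌊N⌋₊, (1:ℝ)/((t:ℝ)+u)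
      ≤ ∫ u in (1:ℝ)..N, ∫ t in (1:ℝ)..N, 1/(t+u) := by
  have h1N : (1:ℝ) ≤ N := by linarith
  set M := ⌊N⌋₊ with hMdef
  have hM2 : 2 ≤ M := Nat.le_floor (by exact_mod_cast hN)
  have hMN : (M : ℝ) ≤ N := Nat.floor_le (by linarith)
  set g : ℝ → ℝ := fun u => Real.log (u + N) - Real.log (u + 1) with hgdef
  have hganti : AntitoneOn g (Set.Icc 1 N) := by
    intro x hx y hy hxy
    simp only [hgdef]
    have h1 : Real.log (y + N) + Real.log (x + 1) ≤ Real.log (x + N) + Real.log (y + 1) := by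
      rw [← Real.log_mul (by nlinarith [hx.1, hy.1]) (by nlinarith [hx.1]),
        ← Real.log_mul (by nlinarith [hx.1]) (by nlinarith [hy.1])]
      apply Real.log_le_log (by nlinarith [hx.1, hy.1])
      nlinarith [hx.1, hy.1]
    linarith
  have hgnn : ∀ x ∈ Set.Icc (1:ℝ) N, 0 ≤ g x := by
    intro x hx
    simp only [hgdef, sub_nonneg]
    apply Real.log_le_log (by linarith [hx.1])
    linarith [hx.1]
  have step1 : ∀ u : ℕ, u ∈ Finset.Icc 2 M →
      ∑ t ∈ Finset.Icc 2 M, (1:ℝ)/((t:ℝ)+u) ≤ g u := by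
    intro u hu
    rw [Finset.mem_Icc] at hu
    have hu2 : (2:ℝ) ≤ (u:ℝ) := by exact_mod_cast hu.1
    have hle : ∑ t ∈ Finset.Icc 2 M, (1:ℝ)/((t:ℝ)+u)
        ≤ ∫ t in (1:ℝ)..N, 1/(t+(u:ℝ)) := by
      apply aux_sum_le_integral (f := fun t => 1/(t+(u:ℝ))) hM2 hMN
      · intro x hx y hy hxy
        apply one_div_le_one_div_of_le (by linarith [hx.1]) (by linarith)
      · intro x hx
        have : (0:ℝ) < x + u := by linarith [hx.1]
        positivity
    rw [aux_inner_val (by linarith) h1N] at hle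
    exact hle
  calc ∑ u ∈ Finset.Icc 2 M, ∑ t ∈ Finset.Icc 2 M, (1:ℝ)/((t:ℝ)+u)
      ≤ ∑ u ∈ Finset.Icc 2 M, g u := Finset.sum_le_sum step1
    _ ≤ ∫ u in (1:ℝ)..N, g u := aux_sum_le_integral hM2 hMN hganti hgnn
    _ = ∫ u in (1:ℝ)..N, ∫ t in (1:ℝ)..N, 1/(t+u) := by
        apply intervalIntegral.integral_congr
        intro u hu
        rw [Set.uIcc_of_le h1N] at hu
        exact (aux_inner_val (by linarith [hu.1]) h1N).symm

/-- With `N = π/(8δ)`, `δ Σ_{u=2}^{N} Σ_{t=2}^{N} 1/(t+u)` is bounded above by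
`δ ∫₁^N ∫₁^N dt du/(t+u)`, which is at most `δ (2N log 2 + 2 log 2)`; hence the
double sum times `δ` is `O(1)` as `δ → 0`. -/
theorem double_sum_O_one :
    (∀ δ : ℝ, 0 < δ → (2 : ℝ) ≤ π / (8 * δ) →
      δ * ∑ u ∈ Finset.Icc 2 ⌊π / (8 * δ)⌋₊, ∑ t ∈ Finset.Icc 2 ⌊π / (8 * δ)⌋₊,
            (1 : ℝ) / ((t : ℝ) + u)
        ≤ δ * ∫ u in (1:ℝ)..(π / (8 * δ)),
              ∫ t in (1:ℝ)..(π / (8 * δ)), 1 / (t + u) ∧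
      δ * (∫ u in (1:ℝ)..(π / (8 * δ)),
              ∫ t in (1:ℝ)..(π / (8 * δ)), 1 / (t + u))
        ≤ δ * (2 * (π / (8 * δ)) * Real.log 2 + 2 * Real.log 2)) ∧
    ∃ C : ℝ, 0 < C ∧ ∀ δ : ℝ, 0 < δ → (2 : ℝ) ≤ π / (8 * δ) →
      δ * ∑ u ∈ Finset.Icc 2 ⌊π / (8 * δ)⌋₊, ∑ t ∈ Finset.Icc 2 ⌊π / (8 * δ)⌋₊,
            (1 : ℝ) / ((t : ℝ) + u) ≤ C := by
  have hmain : ∀ δ : ℝ, 0 < δ → (2 : ℝ) ≤ π / (8 * δ) →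
      δ * ∑ u ∈ Finset.Icc 2 ⌊π / (8 * δ)⌋₊, ∑ t ∈ Finset.Icc 2 ⌊π / (8 * δ)⌋₊,
            (1 : ℝ) / ((t : ℝ) + u)
        ≤ δ * (∫ u in (1:ℝ)..(π / (8 * δ)),
              ∫ t in (1:ℝ)..(π / (8 * δ)), 1 / (t + u)) ∧
      δ * (∫ u in (1:ℝ)..(π / (8 * δ)),
              ∫ t in (1:ℝ)..(π / (8 * δ)), 1 / (t + u))
        ≤ δ * (2 * (π / (8 * δ)) * Real.log 2 + 2 * Real.log 2) := by
    intro δ hδ hN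
    constructor
    · exact mul_le_mul_of_nonneg_left (aux_sum_le_double hN) hδ.le
    · exact mul_le_mul_of_nonneg_left (aux_part2 hN) hδ.le
  refine ⟨fun δ hδ hN => hmain δ hδ hN, π * Real.log 2, ?_, ?_⟩
  · exact mul_pos Real.pi_pos (Real.log_pos one_lt_two)
  · intro δ hδ hN
    obtain ⟨h1, h2⟩ := hmain δ hδ hN
    have hlog2 : (0:ℝ) < Real.log 2 := Real.log_pos one_lt_two
    have h16 : 2 * (8 * δ) ≤ π := (le_div_iff₀ (by positivity)).mp hN
    have heq : δ * (2 * (π / (8 * δ)) * Real.log 2 + 2 * Real.log 2)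
        = (π / 4) * Real.log 2 + 2 * δ * Real.log 2 := by
      field_simp; ring
    have hfin : (π / 4) * Real.log 2 + 2 * δ * Real.log 2 ≤ π * Real.log 2 := by
      nlinarith [mul_le_mul_of_nonneg_right (show 2 * δ ≤ (3/4) * π by linarith) hlog2.le]
    linarith [h1.trans h2, heq ▸ (h1.trans h2)]
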